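/- Let t₀ ∈ ℝ, 1 ≤ q ≤ ∞, and h ∈ L^q_loc([t₀,∞)). Suppose there exist constants C₀, η, κ > 0 and f ∈ L^p([t₀,∞)) with 1 ≤ p < ∞ such that for all t' ≥ t ≥ t₀: ‖h‖_{L^q([t,t'])} ≤ C₀ + ‖f‖_{L^p([t,t'])}^η · ‖h‖_{L^q([t,t'])}^κ. Then h ∈ L^q([t₀,∞)). -/

import Mathlib

open Set MeasureTheory
open scoped ENNReal

open Filter
open scoped Topology

lemma my_eLpNorm_top_add_measure {α : Type*} [MeasurableSpace α] (f : α → ℝ)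
    (μ ν : Measure α) :
    eLpNorm f ⊤ (μ + ν) ≤ max (eLpNorm f ⊤ μ) (eLpNorm f ⊤ ν) := by
  simp only [eLpNorm_exponent_top, eLpNormEssSup]
  refine essSup_le_of_ae_le _ ?_
  have h1 := (ENNReal.ae_le_essSup (μ := μ) fun x => (‖f x‖₊ : ℝ≥0∞)).mono
    (fun x hx => hx.trans (le_max_left (essSup (fun x => (‖f x‖₊ : ℝ≥0∞)) μ)
      (essSup (fun x => (‖f x‖₊ : ℝ≥0∞)) ν)))
  have h2 := (ENNReal.ae_le_essSup (μ := ν) fun x => (‖f x‖₊ : ℝ≥0∞)).mono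
    (fun x hx => hx.trans (le_max_right (essSup (fun x => (‖f x‖₊ : ℝ≥0∞)) μ)
      (essSup (fun x => (‖f x‖₊ : ℝ≥0∞)) ν)))
  exact ae_add_measure_iff.mpr ⟨h1, h2⟩

lemma my_eLpNorm_add_measure {α : Type*} [MeasurableSpace α] (f : α → ℝ) (q : ℝ≥0∞)
    (hq : 1 ≤ q) (μ ν : Measure α) :
    eLpNorm f q (μ + ν) ≤ eLpNorm f q μ + eLpNorm f q ν := by
  rcases eq_or_ne q ⊤ with rfl | hqt
  · exact (my_eLpNorm_top_add_measure f μ ν).trans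
      (max_le le_self_add le_add_self)
  · have hq0 : q ≠ 0 := (zero_lt_one.trans_le hq).ne'
    have hqr : 1 ≤ q.toReal := by
      rw [← ENNReal.toReal_one]
      exact ENNReal.toReal_mono hqt hq
    rw [eLpNorm_eq_lintegral_rpow_enorm_toReal hq0 hqt, eLpNorm_eq_lintegral_rpow_enorm_toReal hq0 hqt,
      eLpNorm_eq_lintegral_rpow_enorm_toReal hq0 hqt, lintegral_add_measure]
    exact ENNReal.rpow_add_le_add_rpow _ _ (by positivity) (by
      rw [div_le_one (by linarith)]; linarith)

/-- Global bootstrap lemma: if `h ∈ L^q_loc([t₀,∞))` satisfies, for all `t' ≥ t ≥ t₀`,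
`‖h‖_{L^q([t,t'])} ≤ C₀ + ‖f‖_{L^p([t,t'])}^η ‖h‖_{L^q([t,t'])}^κ` for some `f ∈ L^p([t₀,∞))`
with `1 ≤ p < ∞` and constants `C₀, η, κ > 0`, then `h ∈ L^q([t₀,∞))`. -/
theorem stmt19 (t₀ : ℝ) (q : ℝ≥0∞) (hq : 1 ≤ q) (h : ℝ → ℝ)
    (hloc : ∀ a b : ℝ, t₀ ≤ a → MemLp h q (volume.restrict (Icc a b)))
    (C₀ η κ : ℝ) (hC₀ : 0 < C₀) (hη : 0 < η) (hκ : 0 < κ)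
    (p : ℝ≥0∞) (hp1 : 1 ≤ p) (hp2 : p ≠ ⊤)
    (f : ℝ → ℝ) (hf : MemLp f p (volume.restrict (Ici t₀)))
    (hineq : ∀ t t' : ℝ, t₀ ≤ t → t ≤ t' →
      (eLpNorm h q (volume.restrict (Icc t t'))).toReal
        ≤ C₀ + (eLpNorm f p (volume.restrict (Icc t t'))).toReal ^ η *
            (eLpNorm h q (volume.restrict (Icc t t'))).toReal ^ κ) :
    MemLp h q (volume.restrict (Ici t₀)) := by
  classical
  have hq0 : q ≠ 0 := (zero_lt_one.trans_le hq).ne'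
  have hp0 : p ≠ 0 := (zero_lt_one.trans_le hp1).ne'
  have hpr_pos : 0 < p.toReal := ENNReal.toReal_pos hp0 hp2
  set pr := p.toReal with hpr_def
  have hfin : ∀ a b : ℝ, t₀ ≤ a → eLpNorm h q (volume.restrict (Icc a b)) ≠ ⊤ :=
    fun a b ha => (hloc a b ha).2.ne
  -- the density measure for f
  set ν : Measure ℝ := (volume.restrict (Ici t₀)).withDensity
    (fun x => (‖f x‖₊ : ℝ≥0∞) ^ pr) with hν_def
  have hν_apply : ∀ s : Set ℝ, MeasurableSet s →
      ν s = ∫⁻ x in s, (‖f x‖₊ : ℝ≥0∞) ^ pr ∂(volume.restrict (Ici t₀)) :=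
    fun s hs => withDensity_apply _ hs
  have hν_fin : ν univ ≠ ⊤ := by
    rw [hν_apply univ MeasurableSet.univ, setLIntegral_univ]
    exact (lintegral_rpow_enorm_lt_top_of_eLpNorm_lt_top hp0 hp2 hf.2).ne
  have hf_norm : ∀ s : Set ℝ, MeasurableSet s → s ⊆ Ici t₀ →
      eLpNorm f p (volume.restrict s) = ν s ^ (1 / pr) := by
    intro s hs hsub
    have hres : volume.restrict s = (volume.restrict (Ici t₀)).restrict s := by
      rw [Measure.restrict_restrict hs, inter_eq_self_of_subset_left hsub]
    rw [hres, eLpNorm_eq_lintegral_rpow_enorm_toReal hp0 hp2, hν_apply s hs]; rfl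
  have hν_ac : ν ≪ volume :=
    (withDensity_absolutelyContinuous _ _).trans
      (Measure.absolutelyContinuous_of_le Measure.restrict_le_self)
  have hpr : pr = p.toReal := hpr_def
  have key : ∃ B : ℝ≥0∞, B ≠ ⊤ ∧
      ∀ n : ℕ, eLpNorm h q (volume.restrict (Icc t₀ (t₀ + n))) ≤ B := by
    rcases eq_or_ne q ⊤ with hqt | hqt
    · subst hqt
      refine ⟨ENNReal.ofReal C₀, ENNReal.ofReal_ne_top, fun n => ?_⟩
      have habn : t₀ ≤ t₀ + (n : ℝ) := le_add_of_nonneg_right n.cast_nonneg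
      suffices hcl : ∀ a b : ℝ, t₀ ≤ a → a ≤ b →
          (eLpNorm h ⊤ (volume.restrict (Icc a b))).toReal ≤ C₀ by
        exact (ENNReal.le_ofReal_iff_toReal_le (hfin _ _ le_rfl) hC₀.le).mpr (hcl t₀ _ le_rfl habn)
      intro a b ha hab
      set X := eLpNorm h ⊤ (volume.restrict (Icc a b)) with hX_def
      set step : ℝ × ℝ → ℝ × ℝ := fun uv =>
        if eLpNorm h ⊤ (volume.restrict (Icc uv.1 ((uv.1 + uv.2) / 2))) = X
          then (uv.1, (uv.1 + uv.2) / 2) else ((uv.1 + uv.2) / 2, uv.2) with hstep_def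
      set I : ℕ → ℝ × ℝ := fun n => step^[n] (a, b) with hI_def
      have hIsucc : ∀ n, I (n + 1) = step (I n) := fun n => Function.iterate_succ_apply' step n (a, b)
      have hinv : ∀ n, (a ≤ (I n).1 ∧ (I n).1 ≤ (I n).2 ∧ (I n).2 ≤ b) ∧
          eLpNorm h ⊤ (volume.restrict (Icc (I n).1 (I n).2)) = X ∧
          (I n).2 - (I n).1 = (b - a) / 2 ^ n := by
        intro n
        induction n with
        | zero => exact ⟨⟨le_rfl, hab, le_rfl⟩, rfl, by simp [hI_def]⟩
        | succ n ih =>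
          obtain ⟨⟨h1, h2, h3⟩, hXn, hlen⟩ := ih
          rw [hIsucc]
          set u := (I n).1 with hu
          set v := (I n).2 with hv
          have hum : u ≤ (u + v) / 2 := by linarith
          have hmv : (u + v) / 2 ≤ v := by linarith
          have h2n : (0 : ℝ) < 2 ^ n := by positivity
          have hlen' : (b - a) / 2 ^ (n + 1) = (v - u) / 2 := by
            rw [pow_succ, ← div_div, hlen]
          have hle1 : eLpNorm h ⊤ (volume.restrict (Icc u ((u + v) / 2))) ≤ X := by
            rw [← hXn]
            exact eLpNorm_mono_measure _ (Measure.restrict_mono (Icc_subset_Icc le_rfl hmv) le_rfl)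
          have hle2 : eLpNorm h ⊤ (volume.restrict (Icc ((u + v) / 2) v)) ≤ X := by
            rw [← hXn]
            exact eLpNorm_mono_measure _ (Measure.restrict_mono (Icc_subset_Icc hum le_rfl) le_rfl)
          have hmax : X ≤ max (eLpNorm h ⊤ (volume.restrict (Icc u ((u + v) / 2))))
              (eLpNorm h ⊤ (volume.restrict (Icc ((u + v) / 2) v))) := by
            rw [← hXn]
            refine le_trans (eLpNorm_mono_measure _ ?_) (my_eLpNorm_top_add_measure h _ _)
            exact le_trans (Measure.restrict_mono (Icc_subset_Icc_union_Icc (b := (u + v) / 2)) le_rfl)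
              (Measure.restrict_union_le _ _)
          simp only [hstep_def]
          split_ifs with hcase
          · exact ⟨⟨h1, hum, hmv.trans h3⟩, hcase, by simp; linarith⟩
          · have hc2 : eLpNorm h ⊤ (volume.restrict (Icc ((u + v) / 2) v)) = X := by
              rcases le_max_iff.mp hmax with hc | hc
              · exact absurd (le_antisymm hle1 hc) hcase
              · exact le_antisymm hle2 hc
            exact ⟨⟨h1.trans hum, hmv, h3⟩, hc2, by simp; linarith⟩
      have hanti : Antitone fun n => Icc (I n).1 (I n).2 := by
        refine antitone_nat_of_succ_le fun n => ?_
        have h2 := (hinv n).1.2.1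
        rw [hIsucc]
        simp only [hstep_def]
        split_ifs
        · exact Icc_subset_Icc le_rfl (by simp; linarith)
        · exact Icc_subset_Icc (by simp; linarith) le_rfl
      have hsub : ∀ n, Icc (I n).1 (I n).2 ⊆ Ici t₀ := fun n x hx =>
        le_trans (ha.trans (hinv n).1.1) hx.1
      have hvol : volume (⋂ n, Icc (I n).1 (I n).2) = 0 := by
        have hle : ∀ n : ℕ, volume (⋂ m, Icc (I m).1 (I m).2) ≤ ENNReal.ofReal ((b - a) / 2 ^ n) :=
          fun n => le_trans (measure_mono (iInter_subset _ n))
            (by rw [Real.volume_Icc, (hinv n).2.2])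
        have htend0 : Tendsto (fun n : ℕ => ENNReal.ofReal ((b - a) / 2 ^ n)) atTop (𝓝 0) := by
          rw [show (0 : ℝ≥0∞) = ENNReal.ofReal 0 by simp]
          apply ENNReal.tendsto_ofReal
          have : Tendsto (fun n : ℕ => (b - a) * (2⁻¹ : ℝ) ^ n) atTop (𝓝 ((b - a) * 0)) :=
            tendsto_const_nhds.mul (tendsto_pow_atTop_nhds_zero_of_lt_one (by norm_num) (by norm_num))
          simpa [div_eq_mul_inv, inv_pow] using this
        exact le_antisymm (ge_of_tendsto htend0 (Eventually.of_forall hle)) zero_le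
      have hν0 : ν (⋂ n, Icc (I n).1 (I n).2) = 0 := hν_ac hvol
      have hνtend : Tendsto (fun n => ν (Icc (I n).1 (I n).2)) atTop (𝓝 0) := by
        have := tendsto_measure_iInter_atTop (μ := ν)
          (fun n => measurableSet_Icc.nullMeasurableSet) hanti
          ⟨0, ((measure_mono (subset_univ _)).trans_lt hν_fin.lt_top).ne⟩
        rwa [hν0] at this
      have hεtend : Tendsto (fun n =>
          (eLpNorm f p (volume.restrict (Icc (I n).1 (I n).2))).toReal) atTop (𝓝 0) := by
        have heq : ∀ n, (eLpNorm f p (volume.restrict (Icc (I n).1 (I n).2))).toReal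
            = (ν (Icc (I n).1 (I n).2)).toReal ^ (1 / pr) := by
          intro n
          rw [hf_norm _ measurableSet_Icc (hsub n), ← ENNReal.toReal_rpow]
        have h1 : Tendsto (fun n => (ν (Icc (I n).1 (I n).2)).toReal) atTop (𝓝 0) := by
          simpa [Function.comp_def] using (ENNReal.tendsto_toReal (by simp)).comp hνtend
        have h2 : Tendsto (fun x : ℝ => x ^ (1 / pr)) (𝓝 0) (𝓝 0) := by
          have := (Real.continuousAt_rpow_const 0 (1 / pr) (Or.inr (by positivity))).tendsto
          simpa [Real.zero_rpow (show pr⁻¹ ≠ 0 from (by positivity : (0:ℝ) < pr⁻¹).ne')] using this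
        exact Tendsto.congr (fun n => (heq n).symm) (h2.comp h1)
      have hXfin : X ≠ ⊤ := hfin a b ha
      have hiter : ∀ n, X.toReal ≤ C₀ +
          (eLpNorm f p (volume.restrict (Icc (I n).1 (I n).2))).toReal ^ η * X.toReal ^ κ := by
        intro n
        have := hineq (I n).1 (I n).2 (ha.trans (hinv n).1.1) (hinv n).1.2.1
        rwa [(hinv n).2.1] at this
      have hrhs : Tendsto (fun n => C₀ +
          (eLpNorm f p (volume.restrict (Icc (I n).1 (I n).2))).toReal ^ η * X.toReal ^ κ)
          atTop (𝓝 C₀) := by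
        have hη0 : Tendsto (fun n =>
            (eLpNorm f p (volume.restrict (Icc (I n).1 (I n).2))).toReal ^ η) atTop (𝓝 0) := by
          have h2 : Tendsto (fun x : ℝ => x ^ η) (𝓝 0) (𝓝 0) := by
            have := (Real.continuousAt_rpow_const 0 η (Or.inr hη.le)).tendsto
            simpa [Real.zero_rpow hη.ne'] using this
          exact h2.comp hεtend
        simpa using tendsto_const_nhds.add (hη0.mul_const (X.toReal ^ κ))
      exact ge_of_tendsto hrhs (Eventually.of_forall hiter)

    ·
      set qr := q.toReal with hqr_def
      have hqr_pos : 0 < qr := ENNReal.toReal_pos hq0 hqt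
      -- the smallness threshold
      set z := (2 * C₀) ^ κ with hz_def
      have hz : 0 < z := Real.rpow_pos_of_pos (by linarith) _
      set δ := (C₀ / (2 * z)) ^ η⁻¹ with hδ_def
      have hδpos : 0 < δ := Real.rpow_pos_of_pos (by positivity) _
      have hδη : δ ^ η = C₀ / (2 * z) := by
        rw [hδ_def, ← Real.rpow_mul (by positivity), inv_mul_cancel₀ hη.ne', Real.rpow_one]
      -- find T₁ with small tail
      obtain ⟨T₁, hT₁, hT₁f⟩ : ∃ T₁, t₀ ≤ T₁ ∧
          eLpNorm f p (volume.restrict (Ici T₁)) ≤ ENNReal.ofReal δ := by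
        have hanti : Antitone fun n : ℕ => Ici (t₀ + n) := fun m n hmn =>
          Ici_subset_Ici.mpr (by exact_mod_cast add_le_add_right (Nat.cast_le.mpr hmn) t₀)
        have hiInter : (⋂ n : ℕ, Ici (t₀ + (n : ℝ))) = ∅ := by
          rw [eq_empty_iff_forall_notMem]
          intro x hx
          obtain ⟨n, hn⟩ := exists_nat_gt (x - t₀)
          exact absurd (mem_iInter.mp hx n) (by simp; linarith)
        have htm : Tendsto (fun n : ℕ => ν (Ici (t₀ + n))) atTop (𝓝 0) := by
          have := tendsto_measure_iInter_atTop (μ := ν)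
            (fun n => measurableSet_Ici.nullMeasurableSet) hanti
            ⟨0, ((measure_mono (subset_univ _)).trans_lt hν_fin.lt_top).ne⟩
          rwa [hiInter, measure_empty] at this
        have hcpos : (0 : ℝ≥0∞) < ENNReal.ofReal δ ^ pr :=
          ENNReal.rpow_pos (ENNReal.ofReal_pos.mpr hδpos) ENNReal.ofReal_ne_top
        obtain ⟨n, hn⟩ := (htm.eventually_lt_const hcpos).exists
        refine ⟨t₀ + n, le_add_of_nonneg_right n.cast_nonneg, ?_⟩
        rw [hf_norm _ measurableSet_Ici (Ici_subset_Ici.mpr (le_add_of_nonneg_right n.cast_nonneg))]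
        calc ν (Ici (t₀ + n)) ^ (1 / pr) ≤ (ENNReal.ofReal δ ^ pr) ^ (1 / pr) :=
              ENNReal.rpow_le_rpow hn.le (by positivity)
          _ = ENNReal.ofReal δ := by
              rw [← ENNReal.rpow_mul, mul_one_div, div_self hpr_pos.ne', ENNReal.rpow_one]
      have hsmall : ∀ t t', T₁ ≤ t → t ≤ t' →
          (eLpNorm f p (volume.restrict (Icc t t'))).toReal ≤ δ := by
        intro t t' ht htt'
        refine ENNReal.toReal_le_of_le_ofReal hδpos.le (le_trans ?_ hT₁f)
        exact eLpNorm_mono_measure _ (Measure.restrict_mono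
          (fun x hx => le_trans ht hx.1) le_rfl)
      -- uniform bound on [T₁, T]
      have hg_bound : ∀ T, T₁ ≤ T → (eLpNorm h q (volume.restrict (Icc T₁ T))).toReal ≤ 2 * C₀ := by
        intro T hT
        by_contra hcon
        push_neg at hcon
        set g : ℝ → ℝ := fun t' => (eLpNorm h q (volume.restrict (Icc T₁ t'))).toReal with hg_def
        have hgcont : ContinuousOn g (Icc T₁ T) := by
          have hint : IntegrableOn (fun x => ‖h x‖ ^ qr) (Icc T₁ T) volume :=
            (hloc T₁ T hT₁).integrable_norm_rpow hq0 hqt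
          have h1 := intervalIntegral.continuousOn_primitive_Icc (a := T₁) (b := T) hint
          have h2 : ContinuousOn (fun x => (∫ t in Icc T₁ x, ‖h t‖ ^ qr) ^ qr⁻¹) (Icc T₁ T) :=
            h1.rpow_const (fun x _ => Or.inr (by positivity))
          refine h2.congr fun t' ht' => ?_
          have hnn : 0 ≤ ∫ t in Icc T₁ t', ‖h t‖ ^ qr :=
            integral_nonneg fun x => by positivity
          show (eLpNorm h q (volume.restrict (Icc T₁ t'))).toReal = _
          rw [(hloc T₁ t' hT₁).eLpNorm_eq_integral_rpow_norm hq0 hqt,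
            ENNReal.toReal_ofReal (Real.rpow_nonneg hnn _)]
        have hg0 : g T₁ = 0 := by
          rw [hg_def]
          simp only [Icc_self]
          rw [show (volume.restrict ({T₁} : Set ℝ)) = 0 from
            Measure.restrict_eq_zero.mpr (measure_singleton _), eLpNorm_measure_zero]
          simp
        have hmem : (2 * C₀) ∈ Icc (g T₁) (g T) := ⟨by rw [hg0]; positivity, hcon.le⟩
        obtain ⟨t', ht'mem, ht'⟩ := intermediate_value_Icc hT hgcont hmem
        have hkey := hineq T₁ t' hT₁ ht'mem.1
        rw [show (eLpNorm h q (volume.restrict (Icc T₁ t'))).toReal = g t' from rfl, ht'] at hkey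
        have hε := hsmall T₁ t' le_rfl ht'mem.1
        have hεη : (eLpNorm f p (volume.restrict (Icc T₁ t'))).toReal ^ η ≤ δ ^ η :=
          Real.rpow_le_rpow ENNReal.toReal_nonneg hε hη.le
        have hmul : (eLpNorm f p (volume.restrict (Icc T₁ t'))).toReal ^ η * (2 * C₀) ^ κ
            ≤ C₀ / 2 := by
          calc (eLpNorm f p (volume.restrict (Icc T₁ t'))).toReal ^ η * (2 * C₀) ^ κ
              ≤ δ ^ η * z := by rw [hz_def]; exact mul_le_mul_of_nonneg_right hεη hz.le
            _ = C₀ / 2 := by rw [hδη]; field_simp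
        linarith
      -- combine
      refine ⟨eLpNorm h q (volume.restrict (Icc t₀ T₁)) + ENNReal.ofReal (2 * C₀), ?_, fun n => ?_⟩
      · exact ENNReal.add_ne_top.mpr ⟨hfin t₀ T₁ le_rfl, ENNReal.ofReal_ne_top⟩
      · rcases le_total (t₀ + (n : ℝ)) T₁ with hc | hc
        · exact le_trans (eLpNorm_mono_measure _ (Measure.restrict_mono
            (Icc_subset_Icc le_rfl hc) le_rfl)) le_self_add
        · have htri : eLpNorm h q (volume.restrict (Icc t₀ (t₀ + n)))
              ≤ eLpNorm h q (volume.restrict (Icc t₀ T₁))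
                + eLpNorm h q (volume.restrict (Icc T₁ (t₀ + n))) := by
            refine le_trans (eLpNorm_mono_measure _ ?_) (my_eLpNorm_add_measure h q hq _ _)
            exact le_trans (Measure.restrict_mono (Icc_subset_Icc_union_Icc (b := T₁)) le_rfl)
              (Measure.restrict_union_le _ _)
          refine htri.trans (add_le_add_right ?_ _)
          exact (ENNReal.le_ofReal_iff_toReal_le (hfin T₁ _ hT₁) (by positivity)).mpr
            (hg_bound _ hc)

  obtain ⟨B, hBt, hB⟩ := key
  -- global exhaustion
  have hmeas_n : ∀ n : ℕ, AEStronglyMeasurable ((Icc t₀ (t₀ + n)).indicator h)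
      (volume.restrict (Ici t₀)) := by
    intro n
    rw [aestronglyMeasurable_indicator_iff measurableSet_Icc,
      Measure.restrict_restrict measurableSet_Icc,
      inter_eq_self_of_subset_left (fun x hx => hx.1)]
    exact (hloc t₀ _ le_rfl).1
  have htend : ∀ᵐ x ∂(volume.restrict (Ici t₀)),
      Tendsto (fun n : ℕ => (Icc t₀ (t₀ + n)).indicator h x) atTop (𝓝 (h x)) := by
    filter_upwards [ae_restrict_mem measurableSet_Ici] with x hx
    obtain ⟨N, hN⟩ := exists_nat_ge (x - t₀)
    refine Filter.Tendsto.congr' ?_ tendsto_const_nhds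
    filter_upwards [eventually_ge_atTop N] with n hn
    have : x ≤ t₀ + n := by
      have : (N : ℝ) ≤ n := Nat.cast_le.mpr hn
      linarith
    exact (Set.indicator_of_mem (show x ∈ Icc t₀ (t₀ + n) from ⟨hx, this⟩) h).symm
  constructor
  · exact aestronglyMeasurable_of_tendsto_ae atTop hmeas_n htend
  · have hle : eLpNorm h q (volume.restrict (Ici t₀)) ≤
        atTop.liminf fun n : ℕ => eLpNorm ((Icc t₀ (t₀ + n)).indicator h) q
          (volume.restrict (Ici t₀)) :=
      Lp.eLpNorm_lim_le_liminf_eLpNorm hmeas_n h htend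
    have heach : ∀ n : ℕ, eLpNorm ((Icc t₀ (t₀ + n)).indicator h) q
        (volume.restrict (Ici t₀)) ≤ B := by
      intro n
      rw [eLpNorm_indicator_eq_eLpNorm_restrict measurableSet_Icc,
        Measure.restrict_restrict measurableSet_Icc,
        inter_eq_self_of_subset_left (fun x hx => hx.1)]
      exact hB n
    have : atTop.liminf (fun n : ℕ => eLpNorm ((Icc t₀ (t₀ + n)).indicator h) q
        (volume.restrict (Ici t₀))) ≤ B :=
      (Filter.liminf_le_liminf (Eventually.of_forall heach)).trans_eq (Filter.liminf_const B)
    exact lt_of_le_of_lt (hle.trans this) hBt.lt_top
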